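/- For every odd integer k ≥ 3, the standard k-cycle (1 2 … k) in the symmetric group S_k can be written as a product c₁ · c₂ of two permutations, where c₁ and c₂ are each cycles of length (k+1)/2 and c₁ is conjugate in S_k to the inverse of c₂. -/

import Mathlib

section Aux

open Equiv Equiv.Perm Finset

lemma support_cycleRange_aux {n : ℕ} (i : Fin (n + 1)) (h0 : i ≠ 0) :
    (Fin.cycleRange i).support = Finset.Iic i := by
  ext x
  simp only [Equiv.Perm.mem_support, Finset.mem_Iic, Fin.cycleRange_apply]
  rcases lt_trichotomy x i with h | h | h
  · simp only [if_pos h]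
    constructor
    · intro _; exact h.le
    · intro _
      intro hc
      have := congrArg Fin.val hc
      rw [Fin.val_add_one_of_lt (lt_of_lt_of_le h (Fin.le_last i))] at this
      omega
  · subst h
    simp only [lt_irrefl, if_neg (lt_irrefl x), if_pos rfl]
    exact ⟨fun _ => le_refl x, fun _ => Ne.symm h0⟩
  · simp [not_lt_of_gt h, h.ne', not_le_of_gt h]

end Aux

/-- For every odd integer `k ≥ 3`, the standard `k`-cycle in `S_k` is a product
`c₁ * c₂` of two cycles of length `(k+1)/2` with `c₁` conjugate to `c₂⁻¹`. -/
theorem standard_cycle_eq_prod_two_conjugate_cycles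
    (k : ℕ) (hk : Odd k) (hk3 : 3 ≤ k) :
    ∃ c₁ c₂ : Equiv.Perm (Fin k),
      finRotate k = c₁ * c₂ ∧
      c₁.IsCycle ∧ c₁.support.card = (k + 1) / 2 ∧
      c₂.IsCycle ∧ c₂.support.card = (k + 1) / 2 ∧
      ∃ σ : Equiv.Perm (Fin k), c₁ = σ * c₂⁻¹ * σ⁻¹ := by
  -- write k = 2*M+1 with M ≥ 1
  obtain ⟨M, hM1, rfl⟩ : ∃ M, 1 ≤ M ∧ k = 2 * M + 1 := by
    obtain ⟨t, ht⟩ := hk; exact ⟨t, by omega, by omega⟩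
  set n : ℕ := 2 * M with hn
  have hkn : 2 * M + 1 = n + 1 := rfl
  rw [hkn]
  set i : Fin (n + 1) := ⟨M, by omega⟩ with hi
  have hi0 : i ≠ 0 := by
    intro h; have := congrArg Fin.val h; simp [hi] at this; omega
  set c₁ : Equiv.Perm (Fin (n + 1)) := Fin.cycleRange i with hc₁def
  set r : Equiv.Perm (Fin (n + 1)) := Equiv.addRight i with hrdef
  set c₂ : Equiv.Perm (Fin (n + 1)) := r * c₁ * r⁻¹ with hc₂def
  have hcard₁ : c₁.support.card = M + 1 := by
    rw [hc₁def, support_cycleRange_aux i hi0, Fin.card_Iic]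
  have hcyc₁ : c₁.IsCycle := Fin.isCycle_cycleRange hi0
  have hcyc₂ : c₂.IsCycle := hcyc₁.conj
  have hcard₂ : c₂.support.card = M + 1 := by
    rw [hc₂def, Equiv.Perm.card_support_conj, hcard₁]
  have hhalf : (2 * M + 1 + 1) / 2 = M + 1 := by omega
  -- key product identity
  have hprod : finRotate (n + 1) = c₁ * c₂ := by
    ext j
    rw [finRotate_succ_apply]
    simp only [hc₂def, Equiv.Perm.mul_apply]
    have hrinv : ∀ x : Fin (n+1), r⁻¹ x = x - i := by
      intro x
      simp [hrdef, sub_eq_add_neg]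
    rw [hrinv]
    have hr : ∀ x : Fin (n+1), r x = x + i := fun x => rfl
    have hsub : ((j - i : Fin (n+1)) : ℕ) = (j.val + (n + 1 - i.val)) % (n + 1) := by
      rw [Fin.sub_def]; simp [Nat.add_comm]
    have hival : (i : ℕ) = M := rfl
    have hjlt := j.is_lt
    -- case analysis on j.val
    rcases lt_trichotomy j.val M with hj | hj | hj
    · -- case A : j.val < M
      have h1 : ((j - i : Fin (n+1)) : ℕ) = j.val + M + 1 := by
        rw [hsub, hival]
        have : j.val + (n + 1 - M) = j.val + M + 1 := by omega
        rw [this, Nat.mod_eq_of_lt (by omega)]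
      have hgt : i < j - i := by rw [Fin.lt_iff_val_lt_val, h1, hival]; omega
      rw [hr, Fin.cycleRange_of_gt hgt]
      have h2 : ((j - i + i : Fin (n+1)) : ℕ) = j.val := by
        rw [Fin.val_add, h1, hival]
        have : j.val + M + 1 + M = j.val + (n + 1) := by omega
        rw [this, Nat.add_mod_right, Nat.mod_eq_of_lt (by omega)]
      have hlt : (j - i + i : Fin (n+1)) < i := by
        rw [Fin.lt_iff_val_lt_val, h2, hival]; omega
      have hji : j - i + i = j := Fin.ext h2
      rw [hji] at hlt ⊢
      rw [Fin.cycleRange_of_lt hlt]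
    · -- case B : j.val = M
      have h1 : ((j - i : Fin (n+1)) : ℕ) = 0 := by
        rw [hsub, hival, hj]
        have : M + (n + 1 - M) = n + 1 := by omega
        rw [this, Nat.mod_self]
      have h1' : (j - i : Fin (n+1)) = 0 := Fin.ext h1
      rw [h1']
      have hlt0 : (0 : Fin (n+1)) < i := by
        rw [Fin.lt_iff_val_lt_val, hival]; simp; omega
      rw [Fin.cycleRange_of_lt hlt0, hr]
      have h2 : ((0 + 1 + i : Fin (n+1)) : ℕ) = M + 1 := by
        rw [Fin.val_add, hival]
        have h01 : ((0 + 1 : Fin (n+1)) : ℕ) = 1 := by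
          simp [Fin.val_add, Nat.mod_eq_of_lt (show 1 < n + 1 by omega)]
        rw [h01, Nat.mod_eq_of_lt (by omega)]
        omega
      have hgt : i < 0 + 1 + i := by rw [Fin.lt_iff_val_lt_val, h2, hival]; omega
      rw [Fin.cycleRange_of_gt hgt]
      rw [h2, Fin.val_add_one_of_lt]
      · omega
      · rw [Fin.lt_iff_val_lt_val, hj]; simp [Fin.val_last]; omega
    · -- case C : M < j.val
      have h1 : ((j - i : Fin (n+1)) : ℕ) = j.val - M := by
        rw [hsub, hival]
        have : j.val + (n + 1 - M) = (j.val - M) + (n + 1) := by omega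
        rw [this, Nat.add_mod_right, Nat.mod_eq_of_lt (by omega)]
      rcases eq_or_lt_of_le (Nat.succ_le_of_lt hjlt) with hj2 | hj2
      · -- j.val = n = 2M, the last element
        have hjval : j.val = n := by omega
        have h1' : (j - i : Fin (n+1)) = i := by
          apply Fin.ext; rw [h1, hival, hjval]; omega
        rw [h1', Fin.cycleRange_self, hr]
        have h2 : ((0 + i : Fin (n+1)) : ℕ) = M := by
          rw [Fin.val_add, hival]
          simp [Nat.mod_eq_of_lt (show M < n + 1 by omega)]
        have h2' : (0 + i : Fin (n+1)) = i := by apply Fin.ext; rw [h2, hival]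
        rw [h2', Fin.cycleRange_self]
        have hone : ((1 : Fin (n+1)) : ℕ) = 1 := by
          rw [Fin.val_one']; exact Nat.mod_eq_of_lt (by omega)
        rw [Fin.val_add, hone, hjval]
        simp
      · -- M < j.val < n
        have hlt : (j - i : Fin (n+1)) < i := by
          rw [Fin.lt_iff_val_lt_val, h1, hival]; omega
        rw [Fin.cycleRange_of_lt hlt, hr]
        have h2 : ((j - i + 1 : Fin (n+1)) : ℕ) = j.val - M + 1 := by
          rw [Fin.val_add, h1]
          simp [Nat.mod_eq_of_lt (show j.val - M + 1 < n + 1 by omega)]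
        have h3 : ((j - i + 1 + i : Fin (n+1)) : ℕ) = j.val + 1 := by
          rw [Fin.val_add, h2, hival]
          have : j.val - M + 1 + M = j.val + 1 := by omega
          rw [this, Nat.mod_eq_of_lt (by omega)]
        have hgt : i < j - i + 1 + i := by
          rw [Fin.lt_iff_val_lt_val, h3, hival]; omega
        rw [Fin.cycleRange_of_gt hgt]
        rw [h3, Fin.val_add_one_of_lt]
        rw [Fin.lt_iff_val_lt_val]; simp [Fin.val_last]; omega
  refine ⟨c₁, c₂, hprod, hcyc₁, by rw [hcard₁, hhalf], hcyc₂, by rw [hcard₂, hhalf], ?_⟩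
  have hconj : IsConj c₂⁻¹ c₁ := by
    apply Equiv.Perm.IsCycle.isConj hcyc₂.inv hcyc₁
    rw [Equiv.Perm.support_inv, hcard₁, hcard₂]
  obtain ⟨σ, hσ⟩ := isConj_iff.mp hconj
  exact ⟨σ, hσ.symm⟩
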